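/- Suppose there exists ε ≥ 0 such that |π_X^y(x)/π_X(x) − 1| ≤ ε for all x ∈ 𝒳 and y ∈ 𝒴 (equivalently, (1−ε)π_X(x)π_Y(y) ≤ π(x,y) ≤ (1+ε)π_X(x)π_Y(y) for all x, y). Let f : 𝒳 × 𝒴 → ℝ≥0 satisfy E f = 1, and define the probability distribution ν on 𝒳 × 𝒴 by ν(x,y) = π(x,y) f(x,y), with marginals ν_X and ν_Y. Then E[(E_X f − 1)(E_Y f − 1)] ≤ 4ε · d_TV(ν_X, π_X) · d_TV(ν_Y, π_Y), where E_X f denotes the function y ↦ E_X^y f and E_Y f the function x ↦ E_Y^x f, and the left-hand expectation is under π. -/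

import Mathlib

open scoped BigOperators Classical

noncomputable section

/-- Expectation of `f` under the (finitely supported) density `p`. -/
def pmean {α : Type*} [Fintype α] (p f : α → ℝ) : ℝ := ∑ a, p a * f a

/-- Variance of `f` under the density `p`. -/
def pvar {α : Type*} [Fintype α] (p f : α → ℝ) : ℝ :=
  pmean p (fun a => (f a - pmean p f) ^ 2)

/-- Entropy of `f` under the density `p` (with the convention `0 log 0 = 0`,
which is automatic since `Real.log 0 = 0`). -/
def pent {α : Type*} [Fintype α] (p f : α → ℝ) : ℝ :=
  pmean p (fun a => f a * Real.log (f a)) - pmean p f * Real.log (pmean p f)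

/-- Total variation distance between two densities. -/
def ptv {α : Type*} [Fintype α] (p q : α → ℝ) : ℝ := (1 / 2) * ∑ a, |p a - q a|

/-- Marginal on the first coordinate. -/
def margX {X Y : Type*} [Fintype X] [Fintype Y] (π : X × Y → ℝ) : X → ℝ :=
  fun x => ∑ y, π (x, y)

/-- Marginal on the second coordinate. -/
def margY {X Y : Type*} [Fintype X] [Fintype Y] (π : X × Y → ℝ) : Y → ℝ :=
  fun y => ∑ x, π (x, y)

/-- Conditional distribution of the first coordinate given the second equals `y`. -/
def condX {X Y : Type*} [Fintype X] [Fintype Y] (π : X × Y → ℝ) (y : Y) : X → ℝ :=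
  fun x => π (x, y) / margY π y

/-- Conditional distribution of the second coordinate given the first equals `x`. -/
def condY {X Y : Type*} [Fintype X] [Fintype Y] (π : X × Y → ℝ) (x : X) : Y → ℝ :=
  fun y => π (x, y) / margX π x

/-- Under the weak-correlation condition `|π_X^y(x)/π_X(x) − 1| ≤ ε`, for `f ≥ 0`
with `E f = 1` and `ν = f·π`,
`E[(E_X f − 1)(E_Y f − 1)] ≤ 4ε · d_TV(ν_X, π_X) · d_TV(ν_Y, π_Y)`. -/
theorem cov_le_four_eps_tv_mul_tv
    {X Y : Type*} [Fintype X] [Fintype Y] [Nonempty X] [Nonempty Y]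
    (π : X × Y → ℝ) (hnn : ∀ z, 0 ≤ π z) (hsum : ∑ z, π z = 1)
    (hX : ∀ x, 0 < margX π x) (hY : ∀ y, 0 < margY π y)
    (ε : ℝ) (hε0 : 0 ≤ ε)
    (hcorr : ∀ y x, |condX π y x / margX π x - 1| ≤ ε)
    (f : X × Y → ℝ) (hf : ∀ z, 0 ≤ f z) (hEf : pmean π f = 1) :
    pmean π (fun z =>
        (pmean (condX π z.2) (fun x => f (x, z.2)) - 1) *
        (pmean (condY π z.1) (fun y => f (z.1, y)) - 1)) ≤
      4 * ε * ptv (margX (fun z => π z * f z)) (margX π) *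
        ptv (margY (fun z => π z * f z)) (margY π) := by
  classical
  set g : Y → ℝ := fun y => pmean (condX π y) (fun x => f (x, y)) - 1 with hgdef
  set h : X → ℝ := fun x => pmean (condY π x) (fun y => f (x, y)) - 1 with hhdef
  -- marginal identities
  have hXh : ∀ x, margX π x * h x = margX (fun z => π z * f z) x - margX π x := by
    intro x
    have hx := (hX x).ne'
    simp only [hhdef, pmean, condY, margX]
    rw [mul_sub, mul_one, Finset.mul_sum]
    congr 1
    refine Finset.sum_congr rfl fun y _ => ?_
    field_simp
    rw [mul_assoc]
    exact mul_div_cancel_left₀ _ hx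
  have hYg : ∀ y, margY π y * g y = margY (fun z => π z * f z) y - margY π y := by
    intro y
    have hy := (hY y).ne'
    simp only [hgdef, pmean, condX, margY]
    rw [mul_sub, mul_one, Finset.mul_sum]
    congr 1
    refine Finset.sum_congr rfl fun x _ => ?_
    field_simp
    rw [mul_assoc]
    exact mul_div_cancel_left₀ _ hy
  have hsumπf : ∑ x, ∑ y, π (x, y) * f (x, y) = 1 := by
    have := hEf
    simp only [pmean] at this
    rw [← this]
    rw [Fintype.sum_prod_type]
  have hsumπ : ∑ x, ∑ y, π (x, y) = 1 := by
    rw [← hsum]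
    rw [Fintype.sum_prod_type]
  have hsumh : ∑ x, margX π x * h x = 0 := by
    have : ∑ x, margX π x * h x
        = (∑ x, margX (fun z => π z * f z) x) - ∑ x, margX π x := by
      rw [← Finset.sum_sub_distrib]
      exact Finset.sum_congr rfl fun x _ => hXh x
    rw [this]
    simp only [margX]
    rw [hsumπf, hsumπ]
    ring
  have hsumg : ∑ y, margY π y * g y = 0 := by
    have : ∑ y, margY π y * g y
        = (∑ y, margY (fun z => π z * f z) y) - ∑ y, margY π y := by
      rw [← Finset.sum_sub_distrib]
      exact Finset.sum_congr rfl fun y _ => hYg y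
    rw [this]
    simp only [margY]
    rw [Finset.sum_comm, hsumπf, Finset.sum_comm, hsumπ]
    ring
  -- pointwise bound from hcorr
  have hbound : ∀ x y, |π (x, y) - margX π x * margY π y| ≤ ε * (margX π x * margY π y) := by
    intro x y
    have hc := hcorr y x
    have hx := hX x
    have hy := hY y
    have key : condX π y x / margX π x - 1
        = (π (x, y) - margX π x * margY π y) / (margX π x * margY π y) := by
      simp only [condX]
      field_simp
    rw [key, abs_div, abs_of_pos (mul_pos hx hy), div_le_iff₀ (mul_pos hx hy)] at hc
    linarith
  -- the zero cross term
  have hzero : ∑ z : X × Y, margX π z.1 * margY π z.2 * (g z.2 * h z.1) = 0 := by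
    rw [Fintype.sum_prod_type]
    have : ∀ x, ∑ y, margX π x * margY π y * (g y * h x)
        = (margX π x * h x) * ∑ y, margY π y * g y := by
      intro x
      rw [Finset.mul_sum]
      exact Finset.sum_congr rfl fun y _ => by ring
    rw [Finset.sum_congr rfl fun x _ => this x]
    simp [hsumg]
  -- tv identities
  have htvX : ∑ x, margX π x * |h x| = 2 * ptv (margX (fun z => π z * f z)) (margX π) := by
    have e : ∀ x, margX π x * |h x| = |margX (fun z => π z * f z) x - margX π x| := by
      intro x; rw [← hXh x, abs_mul, abs_of_pos (hX x)]
    rw [Finset.sum_congr rfl fun x _ => e x]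
    simp only [ptv]; ring
  have htvY : ∑ y, margY π y * |g y| = 2 * ptv (margY (fun z => π z * f z)) (margY π) := by
    have e : ∀ y, margY π y * |g y| = |margY (fun z => π z * f z) y - margY π y| := by
      intro y; rw [← hYg y, abs_mul, abs_of_pos (hY y)]
    rw [Finset.sum_congr rfl fun y _ => e y]
    simp only [ptv]; ring
  -- main calculation
  have hLHS : pmean π (fun z =>
        (pmean (condX π z.2) (fun x => f (x, z.2)) - 1) *
        (pmean (condY π z.1) (fun y => f (z.1, y)) - 1))
      = ∑ z : X × Y, π z * (g z.2 * h z.1) := rfl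
  have hmain : (∑ z : X × Y, π z * (g z.2 * h z.1))
      = ∑ z : X × Y, (π z - margX π z.1 * margY π z.2) * (g z.2 * h z.1) := by
    have e : ∀ z : X × Y, (π z - margX π z.1 * margY π z.2) * (g z.2 * h z.1)
        = π z * (g z.2 * h z.1) - margX π z.1 * margY π z.2 * (g z.2 * h z.1) :=
      fun z => by ring
    rw [Finset.sum_congr rfl fun z _ => e z, Finset.sum_sub_distrib, hzero, sub_zero]
  rw [hLHS, hmain]
  calc ∑ z : X × Y, (π z - margX π z.1 * margY π z.2) * (g z.2 * h z.1)
      ≤ ∑ z : X × Y, ε * (margX π z.1 * margY π z.2) * (|g z.2| * |h z.1|) := by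
        refine Finset.sum_le_sum fun z _ => ?_
        calc (π z - margX π z.1 * margY π z.2) * (g z.2 * h z.1)
            ≤ |(π z - margX π z.1 * margY π z.2) * (g z.2 * h z.1)| := le_abs_self _
          _ = |π z - margX π z.1 * margY π z.2| * (|g z.2| * |h z.1|) := by
              rw [abs_mul, abs_mul]
          _ ≤ ε * (margX π z.1 * margY π z.2) * (|g z.2| * |h z.1|) := by
              refine mul_le_mul_of_nonneg_right ?_ (mul_nonneg (abs_nonneg _) (abs_nonneg _))
              have : π z = π (z.1, z.2) := by rfl
              rw [this]
              exact hbound z.1 z.2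
    _ = ε * ((∑ x, margX π x * |h x|) * (∑ y, margY π y * |g y|)) := by
        rw [Finset.sum_mul_sum, Finset.mul_sum, Fintype.sum_prod_type]
        refine Finset.sum_congr rfl fun x _ => ?_
        rw [Finset.mul_sum]
        refine Finset.sum_congr rfl fun y _ => by ring
    _ = 4 * ε * ptv (margX (fun z => π z * f z)) (margX π) *
        ptv (margY (fun z => π z * f z)) (margY π) := by
        rw [htvX, htvY]; ring

end
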